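/- Let $q > b \geq 1$ be integers and define $f:(\mathbb{R}^q)^b \to \mathbb{R}^q$ by $(f(\beta^1,\ldots,\beta^b))_i = \frac{\sum_{j \neq i}\prod_\ell \beta^\ell_j}{(q-1)\sum_j \prod_\ell \beta^\ell_j}$. Let $\gamma^1,\ldots,\gamma^{b-1}$ be probability vectors on $[q]$ with entries in $[0, 1/(q-1)]$, and let $\alpha,\beta$ be probability vectors with entries in $[\frac{1}{q-1}(1-\frac{1}{q-b}), \frac{1}{q-1}]$. Set $z_j = \prod_{i=1}^{b-1}\gamma^i_j$ and $A = \sum_{j=1}^q z_j \alpha_j$, and assume $A > 0$. Then $\|f(\gamma^1,\ldots,\gamma^{b-1},\alpha) - f(\gamma^1,\ldots,\gamma^{b-1},\beta)\|_1 \leq \frac{1}{(q-1)^b A}\|\alpha - \beta\|_1$. -/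

import Mathlib

open Finset

theorem stmt_17 (q b : ℕ) (hb : 1 ≤ b) (hqb : b < q)
    (γ : Fin (b - 1) → Fin q → ℝ)
    (hγsum : ∀ i, ∑ j, γ i j = 1)
    (hγb : ∀ i j, 0 ≤ γ i j ∧ γ i j ≤ 1 / ((q : ℝ) - 1))
    (α β : Fin q → ℝ)
    (hαsum : ∑ j, α j = 1) (hβsum : ∑ j, β j = 1)
    (hαb : ∀ j, (1 / ((q : ℝ) - 1)) * (1 - 1 / ((q : ℝ) - b)) ≤ α j ∧
      α j ≤ 1 / ((q : ℝ) - 1))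
    (hβb : ∀ j, (1 / ((q : ℝ) - 1)) * (1 - 1 / ((q : ℝ) - b)) ≤ β j ∧
      β j ≤ 1 / ((q : ℝ) - 1))
    (z : Fin q → ℝ) (hz : ∀ j, z j = ∏ i, γ i j)
    (A : ℝ) (hA : A = ∑ j, z j * α j) (hApos : 0 < A) :
    ∑ i, |(∑ j ∈ Finset.univ.filter (fun j => j ≠ i), z j * α j) /
            (((q : ℝ) - 1) * ∑ j, z j * α j) -
          (∑ j ∈ Finset.univ.filter (fun j => j ≠ i), z j * β j) /
            (((q : ℝ) - 1) * ∑ j, z j * β j)| ≤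
      (1 / (((q : ℝ) - 1) ^ b * A)) * ∑ j, |α j - β j| := by
  have hq2 : 1 < q := lt_of_le_of_lt hb hqb
  have hq2' : (2:ℝ) ≤ (q:ℝ) := by exact_mod_cast hq2
  set K : ℝ := (q:ℝ) - 1 with hKdef
  have hK1 : (1:ℝ) ≤ K := by simp only [hKdef]; linarith
  have hKpos : (0:ℝ) < K := by linarith
  have hqbR : (b:ℝ) + 1 ≤ (q:ℝ) := by exact_mod_cast hqb
  have hLnn : 0 ≤ (1 / K) * (1 - 1 / ((q:ℝ) - b)) := by
    have h1 : (1:ℝ) ≤ (q:ℝ) - b := by linarith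
    have h2 : 1 / ((q:ℝ) - b) ≤ 1 := by
      rw [div_le_one (by linarith)]; linarith
    have h3 : (0:ℝ) ≤ 1 / K := by positivity
    apply mul_nonneg h3 (by linarith)
  have hαnn : ∀ j, 0 ≤ α j := fun j => le_trans hLnn (hαb j).1
  have hβnn : ∀ j, 0 ≤ β j := fun j => le_trans hLnn (hβb j).1
  have hznn : ∀ j, 0 ≤ z j := fun j => by
    rw [hz]; exact Finset.prod_nonneg (fun i _ => (hγb i j).1)
  have hzle : ∀ j, z j ≤ (1/K)^(b-1) := by
    intro j
    rw [hz]
    calc ∏ i, γ i j ≤ ∏ _i : Fin (b-1), (1/K) :=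
          Finset.prod_le_prod (fun i _ => (hγb i j).1) (fun i _ => (hγb i j).2)
      _ = (1/K)^(b-1) := by simp
  set B : ℝ := ∑ j, z j * β j with hB
  have hBnnterms : ∀ j ∈ (univ : Finset (Fin q)), 0 ≤ z j * β j :=
    fun j _ => mul_nonneg (hznn j) (hβnn j)
  -- B > 0
  have hBpos : 0 < B := by
    rcases (Finset.sum_nonneg hBnnterms).lt_or_eq with h | h
    · exact h
    · exfalso
      have hzero : ∀ j ∈ (univ : Finset (Fin q)), z j * β j = 0 :=
        (Finset.sum_eq_zero_iff_of_nonneg hBnnterms).mp h.symm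
      -- the set of zeros of z has cardinality ≤ b - 1
      have hcard1 : ∀ i, (univ.filter (fun j => γ i j = 0)).card ≤ 1 := by
        intro i
        rw [Finset.card_le_one]
        intro j hj j' hj'
        by_contra hne
        have h0 : γ i j = 0 := (mem_filter.mp hj).2
        have h0' : γ i j' = 0 := (mem_filter.mp hj').2
        have hsum1 : ∑ k ∈ ((univ : Finset (Fin q)).erase j).erase j', γ i k = 1 := by
          rw [Finset.sum_erase _ h0', Finset.sum_erase _ h0, hγsum i]
        have hle : ∑ k ∈ ((univ : Finset (Fin q)).erase j).erase j', γ i k ≤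
            (((univ : Finset (Fin q)).erase j).erase j').card • (1/K) :=
          Finset.sum_le_card_nsmul _ _ _ (fun k _ => (hγb i k).2)
        have hjmem : j' ∈ (univ : Finset (Fin q)).erase j :=
          Finset.mem_erase.mpr ⟨fun hcon => hne hcon.symm, mem_univ j'⟩
        have hcard : (((univ : Finset (Fin q)).erase j).erase j').card = q - 2 := by
          rw [Finset.card_erase_of_mem hjmem, Finset.card_erase_of_mem (mem_univ j)]
          simp only [Finset.card_univ, Fintype.card_fin]
          omega
        rw [hsum1, hcard, nsmul_eq_mul] at hle
        have hcast : ((q - 2 : ℕ) : ℝ) = (q:ℝ) - 2 := by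
          have : (2:ℕ) ≤ q := hq2
          push_cast [Nat.cast_sub this]
          ring
        rw [hcast] at hle
        have : ((q:ℝ) - 2) * (1/K) < 1 := by
          rw [mul_one_div, div_lt_one hKpos]
          simp only [hKdef]; linarith
        linarith
      have hTcard : (univ.filter (fun j => z j = 0)).card ≤ b - 1 := by
        have hsub : univ.filter (fun j => z j = 0) ⊆
            Finset.univ.biUnion (fun i : Fin (b-1) => univ.filter (fun j => γ i j = 0)) := by
          intro j hj
          have hzj : z j = 0 := (mem_filter.mp hj).2
          rw [hz] at hzj
          rcases Finset.prod_eq_zero_iff.mp hzj with ⟨i, _, hi⟩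
          exact Finset.mem_biUnion.mpr ⟨i, mem_univ i, mem_filter.mpr ⟨mem_univ j, hi⟩⟩
        calc (univ.filter (fun j => z j = 0)).card
            ≤ (Finset.univ.biUnion (fun i : Fin (b-1) =>
                univ.filter (fun j => γ i j = 0))).card := Finset.card_le_card hsub
          _ ≤ ∑ i : Fin (b-1), (univ.filter (fun j => γ i j = 0)).card :=
              Finset.card_biUnion_le
          _ ≤ ∑ _i : Fin (b-1), 1 := Finset.sum_le_sum (fun i _ => hcard1 i)
          _ = b - 1 := by simp
      have h1 : (1:ℝ) = ∑ j ∈ univ.filter (fun j => z j = 0), β j := by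
        rw [← hβsum]
        refine (Finset.sum_subset (Finset.subset_univ _) ?_).symm
        intro j _ hj
        have hzj : z j ≠ 0 := by simpa using hj
        rcases mul_eq_zero.mp (hzero j (mem_univ j)) with h' | h'
        · exact absurd h' hzj
        · exact h'
      have h2 : ∑ j ∈ univ.filter (fun j => z j = 0), β j ≤
          (univ.filter (fun j => z j = 0)).card • (1/K) :=
        Finset.sum_le_card_nsmul _ _ _ (fun j _ => (hβb j).2)
      rw [nsmul_eq_mul] at h2
      have hcardR : ((univ.filter (fun j => z j = 0)).card : ℝ) ≤ (q:ℝ) - 2 := by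
        have hb1 : b - 1 ≤ q - 2 := by omega
        have := le_trans hTcard hb1
        calc ((univ.filter (fun j => z j = 0)).card : ℝ) ≤ ((q - 2 : ℕ) : ℝ) := by
              exact_mod_cast this
          _ = (q:ℝ) - 2 := by
              have h2q : (2:ℕ) ≤ q := hq2
              push_cast [Nat.cast_sub h2q]; ring
      have hlt : ((univ.filter (fun j => z j = 0)).card : ℝ) * (1/K) < 1 := by
        rw [mul_one_div, div_lt_one hKpos]
        have : (q:ℝ) - 2 < K := by simp only [hKdef]; linarith
        linarith
      linarith
  -- main part
  have hKne : K ≠ 0 := ne_of_gt hKpos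
  have hAne : A ≠ 0 := ne_of_gt hApos
  have hBne : B ≠ 0 := ne_of_gt hBpos
  set x : Fin q → ℝ := fun i => A * (β i - α i) - α i * (B - A) with hx
  have hx' : ∀ i, x i = B * (β i - α i) - β i * (B - A) := by
    intro i; simp only [hx]; ring
  have hzd : ∑ j, z j * (β j - α j) = B - A := by
    have : ∀ j, z j * (β j - α j) = z j * β j - z j * α j := fun j => by ring
    rw [Finset.sum_congr rfl fun j _ => this j, Finset.sum_sub_distrib, ← hA, ← hB]
  have hd0 : ∑ j, (β j - α j) = 0 := by
    rw [Finset.sum_sub_distrib, hαsum, hβsum]; ring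
  have hzx0 : ∑ i, z i * x i = 0 := by
    have h1 : ∑ i, z i * x i =
        A * (∑ i, z i * (β i - α i)) - (B - A) * (∑ i, z i * α i) := by
      rw [Finset.mul_sum, Finset.mul_sum, ← Finset.sum_sub_distrib]
      exact Finset.sum_congr rfl fun i _ => by simp only [hx]; ring
    rw [h1, hzd, ← hA]; ring
  have habs2 : ∀ y : ℝ, |y| = 2 * max y 0 - y := by
    intro y
    rcases le_total 0 y with h | h
    · rw [abs_of_nonneg h, max_eq_left h]; ring
    · rw [abs_of_nonpos h, max_eq_right h]; ring
  set G : ℝ := ∑ j, |α j - β j| with hG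
  have hGd : G = ∑ j, |β j - α j| := by
    simp only [hG]; exact Finset.sum_congr rfl fun j _ => abs_sub_comm _ _
  have hGnn : 0 ≤ G := by
    rw [hG]; exact Finset.sum_nonneg fun j _ => abs_nonneg _
  -- key estimate
  have key : ∑ i, z i * |x i| ≤ (1/K)^(b-1) * B * G := by
    rcases le_total A B with hAB | hAB
    · -- case A ≤ B : use max(x,0) ≤ A * max(d,0)
      have e1 : ∑ i, z i * |x i| = 2 * ∑ i, z i * max (x i) 0 := by
        have : ∀ i, z i * |x i| = 2 * (z i * max (x i) 0) - z i * x i := by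
          intro i; rw [habs2 (x i)]; ring
        rw [Finset.sum_congr rfl fun i _ => this i, Finset.sum_sub_distrib, hzx0,
          ← Finset.mul_sum]; ring
      have hmax : ∀ i, max (x i) 0 ≤ A * max (β i - α i) 0 := by
        intro i
        have h1 : x i ≤ A * max (β i - α i) 0 := by
          have hα : 0 ≤ α i * (B - A) := mul_nonneg (hαnn i) (by linarith)
          have : x i ≤ A * (β i - α i) := by simp only [hx]; linarith
          exact this.trans (mul_le_mul_of_nonneg_left (le_max_left _ _) hApos.le)
        exact max_le h1 (mul_nonneg hApos.le (le_max_right _ _))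
      have e2 : ∑ i, z i * max (x i) 0 ≤ (1/K)^(b-1) * A * ∑ i, max (β i - α i) 0 := by
        rw [mul_assoc, Finset.mul_sum, Finset.mul_sum]
        apply Finset.sum_le_sum
        intro i _
        exact mul_le_mul (hzle i) (hmax i) (le_max_right _ _) (by positivity)
      have e3 : ∑ i, max (β i - α i) 0 = G / 2 := by
        have h : G = 2 * ∑ i, max (β i - α i) 0 - ∑ i, (β i - α i) := by
          rw [hGd, Finset.sum_congr rfl fun i (_ : i ∈ univ) => habs2 (β i - α i),
            Finset.sum_sub_distrib, ← Finset.mul_sum]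
        rw [hd0] at h; linarith
      calc ∑ i, z i * |x i| = 2 * ∑ i, z i * max (x i) 0 := e1
        _ ≤ 2 * ((1/K)^(b-1) * A * (G/2)) := by
            rw [e3] at e2; linarith
        _ = (1/K)^(b-1) * A * G := by ring
        _ ≤ (1/K)^(b-1) * B * G := by
            rw [mul_assoc, mul_assoc]
            exact mul_le_mul_of_nonneg_left (mul_le_mul_of_nonneg_right hAB hGnn)
              (by positivity)
    · -- case B ≤ A : use max(-x,0) ≤ B * max(-(d),0)
      have e1 : ∑ i, z i * |x i| = 2 * ∑ i, z i * max (-x i) 0 := by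
        have : ∀ i, z i * |x i| = 2 * (z i * max (-x i) 0) + z i * x i := by
          intro i
          have := habs2 (-x i)
          rw [abs_neg] at this
          rw [this]; ring
        rw [Finset.sum_congr rfl fun i _ => this i, Finset.sum_add_distrib, hzx0,
          ← Finset.mul_sum]; ring
      have hmax : ∀ i, max (-x i) 0 ≤ B * max (α i - β i) 0 := by
        intro i
        have h1 : -x i ≤ B * max (α i - β i) 0 := by
          have hβ : 0 ≤ β i * (A - B) := mul_nonneg (hβnn i) (by linarith)
          have : -x i ≤ B * (α i - β i) := by rw [hx' i]; linarith
          exact this.trans (mul_le_mul_of_nonneg_left (le_max_left _ _) hBpos.le)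
        exact max_le h1 (mul_nonneg hBpos.le (le_max_right _ _))
      have e2 : ∑ i, z i * max (-x i) 0 ≤ (1/K)^(b-1) * B * ∑ i, max (α i - β i) 0 := by
        rw [mul_assoc, Finset.mul_sum, Finset.mul_sum]
        apply Finset.sum_le_sum
        intro i _
        exact mul_le_mul (hzle i) (hmax i) (le_max_right _ _) (by positivity)
      have e3 : ∑ i, max (α i - β i) 0 = G / 2 := by
        have hd0' : ∑ i, (α i - β i) = 0 := by
          rw [Finset.sum_sub_distrib, hαsum, hβsum]; ring
        have h : G = 2 * ∑ i, max (α i - β i) 0 - ∑ i, (α i - β i) := by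
          rw [hG, Finset.sum_congr rfl fun i (_ : i ∈ univ) => habs2 (α i - β i),
            Finset.sum_sub_distrib, ← Finset.mul_sum]
        rw [hd0'] at h; linarith
      calc ∑ i, z i * |x i| = 2 * ∑ i, z i * max (-x i) 0 := e1
        _ ≤ 2 * ((1/K)^(b-1) * B * (G/2)) := by
            rw [e3] at e2; linarith
        _ = (1/K)^(b-1) * B * G := by ring
  -- rewrite each term of the LHS
  have hterm : ∀ i : Fin q, (∑ j ∈ univ.filter (fun j => j ≠ i), z j * α j) / (K * A) -
      (∑ j ∈ univ.filter (fun j => j ≠ i), z j * β j) / (K * B) =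
      z i * x i / (K * (A * B)) := by
    intro i
    have hfα : ∑ j ∈ univ.filter (fun j => j ≠ i), z j * α j = A - z i * α i := by
      rw [Finset.filter_ne', Finset.sum_erase_eq_sub (mem_univ i), ← hA]
    have hfβ : ∑ j ∈ univ.filter (fun j => j ≠ i), z j * β j = B - z i * β i := by
      rw [Finset.filter_ne', Finset.sum_erase_eq_sub (mem_univ i), ← hB]
    rw [hfα, hfβ]
    simp only [hx]
    field_simp
    ring
  rw [← hA]
  calc ∑ i, |(∑ j ∈ univ.filter (fun j => j ≠ i), z j * α j) / (K * A) -
        (∑ j ∈ univ.filter (fun j => j ≠ i), z j * β j) / (K * B)|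
      = ∑ i, z i * |x i| / (K * (A * B)) := by
        refine Finset.sum_congr rfl fun i _ => ?_
        rw [hterm i, abs_div, abs_mul, abs_of_nonneg (hznn i),
          abs_of_pos (by positivity : (0:ℝ) < K * (A * B))]
    _ = (∑ i, z i * |x i|) / (K * (A * B)) := by rw [Finset.sum_div]
    _ ≤ ((1/K)^(b-1) * B * G) / (K * (A * B)) := by
        have hpos : (0:ℝ) < K * (A * B) := by positivity
        exact (div_le_div_iff_of_pos_right hpos).mpr key
    _ = 1 / (K ^ b * A) * G := by
        have hKb : K ^ b = K ^ (b-1) * K := by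
          conv_lhs => rw [← Nat.sub_add_cancel hb]
          rw [pow_succ]
        rw [one_div_pow, hKb]
        field_simp
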